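/- Let (Λ, δ) be a population protocol with output state y and let (o_n)_{n∈ℕ} be an infinite nondecreasing sequence of stable configurations with Γ = unbdd((o_n)). Then for every n, every u ∈ ℕ^Γ and every w ∈ ℕ^Λ with w ≤ o_n + u componentwise, the configuration o_n + u − w is stable. -/
import Mathlib


/-! Basic definitions for (leaderless) population protocols:
configurations, transitions, paths, reachability, bottlenecks, stability. -/

namespace PP

variable {Λ : Type*}

open Classical in
/-- The configuration consisting of a single agent in state `s`. -/
noncomputable def single (s : Λ) : Λ → ℕ := fun t => if t = s then 1 else 0

/-- The configuration consisting of the two agents of the ordered pair `r`. -/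
noncomputable def pairConf (r : Λ × Λ) : Λ → ℕ := single r.1 + single r.2

/-- The transition with input pair `r` is applicable to configuration `c`. -/
def Applicable (c : Λ → ℕ) (r : Λ × Λ) : Prop := pairConf r ≤ c

/-- The result of applying the transition with inputs `r` (and outputs `δ r`) to `c`. -/
noncomputable def applyTx (δ : Λ × Λ → Λ × Λ) (r : Λ × Λ) (c : Λ → ℕ) : Λ → ℕ :=
  c - pairConf r + pairConf (δ r)

/-- `PathFrom δ c p c'`: executing the transition sequence `p` (each transition given
by its ordered pair of input states) from `c` is valid and ends in `c'`. -/
inductive PathFrom (δ : Λ × Λ → Λ × Λ) : (Λ → ℕ) → List (Λ × Λ) → (Λ → ℕ) → Prop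
  | nil (c : Λ → ℕ) : PathFrom δ c [] c
  | cons {c c' : Λ → ℕ} (r : Λ × Λ) {p : List (Λ × Λ)} :
      Applicable c r → PathFrom δ (applyTx δ r c) p c' → PathFrom δ c (r :: p) c'

/-- `Reach δ c c'` means `c ⟹ c'`: some finite path leads from `c` to `c'`. -/
def Reach (δ : Λ × Λ → Λ × Λ) (c c' : Λ → ℕ) : Prop := ∃ p, PathFrom δ c p c'

/-- `NoBottleneck δ b c p`: no transition of path `p` executed from `c` is a
`b`-bottleneck for the configuration to which it is applied. -/
inductive NoBottleneck (δ : Λ × Λ → Λ × Λ) (b : ℕ) : (Λ → ℕ) → List (Λ × Λ) → Prop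
  | nil (c : Λ → ℕ) : NoBottleneck δ b c []
  | cons {c : Λ → ℕ} (r : Λ × Λ) {p : List (Λ × Λ)} :
      ¬(c r.1 ≤ b ∧ c r.2 ≤ b) → NoBottleneck δ b (applyTx δ r c) p →
      NoBottleneck δ b c (r :: p)

/-- A configuration is stable w.r.t. output state `y` if the count of `y` can never
change again. -/
def Stable (δ : Λ × Λ → Λ × Λ) (y : Λ) (o : Λ → ℕ) : Prop :=
  ∀ o', Reach δ o o' → o' y = o y

/-- The transition function is symmetric. -/
def Symmetric (δ : Λ × Λ → Λ × Λ) : Prop :=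
  ∀ r1 r2 : Λ, δ (r2, r1) = ((δ (r1, r2)).2, (δ (r1, r2)).1)

end PP


namespace PP

theorem pathFrom_add {Λ : Type*} {δ : Λ × Λ → Λ × Λ} {c d : Λ → ℕ} {p : List (Λ × Λ)}
    (h : PathFrom δ c p d) (w : Λ → ℕ) : PathFrom δ (c + w) p (d + w) := by
  induction h with
  | nil c => exact PathFrom.nil _
  | @cons c1 c2 r p1 happ _ ih =>
    refine PathFrom.cons r ?_ ?_
    · intro s; exact le_trans (happ s) (Nat.le_add_right _ _)
    · have : applyTx δ r (c1 + w) = applyTx δ r c1 + w := by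
        funext s
        have := happ s
        simp only [applyTx, Pi.add_apply, Pi.sub_apply] at *
        omega
      rw [this]; exact ih

theorem stable_sub {Λ : Type*} {δ : Λ × Λ → Λ × Λ} {y : Λ} {c w : Λ → ℕ}
    (hst : Stable δ y c) (hw : w ≤ c) : Stable δ y (c - w) := by
  intro o' ho'
  obtain ⟨p, hp⟩ := ho'
  have hp' := pathFrom_add hp w
  have hcw : c - w + w = c := by
    funext s; have h : w s ≤ c s := hw s
    show c s - w s + w s = c s
    omega
  rw [hcw] at hp'
  have h2 := hst (o' + w) ⟨p, hp'⟩
  have hwy : w y ≤ c y := hw y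
  simp only [Pi.add_apply] at h2
  show o' y = (c - w) y
  simp only [Pi.sub_apply]
  omega

end PP

/-- If `(o_n)` is an infinite nondecreasing sequence of stable configurations and
`Γ = unbdd((o_n))`, then for every `n`, every `u ∈ ℕ^Γ` and every `w ≤ o_n + u`,
the configuration `o_n + u − w` is stable. -/
theorem stmt6 {Λ : Type*} [Fintype Λ] (δ : Λ × Λ → Λ × Λ) (y : Λ)
    (o : ℕ → Λ → ℕ) (hmono : Monotone o) (hst : ∀ n, PP.Stable δ y (o n))
    (Γ : Set Λ) (hΓ : ∀ s : Λ, s ∈ Γ ↔ ¬ ∃ B : ℕ, ∀ n, o n s < B) :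
    ∀ (n : ℕ) (u w : Λ → ℕ), (∀ s ∉ Γ, u s = 0) → w ≤ o n + u →
      PP.Stable δ y (o n + u - w) := by
  intro n u w hu hw
  have h1 : ∀ s : Λ, ∃ k, o n s + u s ≤ o k s := by
    intro s
    by_cases hs : s ∈ Γ
    · have := (hΓ s).mp hs
      push_neg at this
      obtain ⟨k, hk⟩ := this (o n s + u s)
      exact ⟨k, by omega⟩
    · exact ⟨n, by rw [hu s hs]; omega⟩
  choose f hf using h1
  set m := Finset.univ.sup f with hm
  have h2 : ∀ s : Λ, o n s + u s ≤ o m s := by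
    intro s
    exact le_trans (hf s) (hmono (Finset.le_sup (Finset.mem_univ s)) s)
  set w' : Λ → ℕ := w + (o m - (o n + u)) with hw'
  have hw'le : w' ≤ o m := by
    intro s; have := h2 s; have := hw s
    simp only [hw', Pi.add_apply, Pi.sub_apply] at *
    omega
  have key : o n + u - w = o m - w' := by
    funext s; have := h2 s; have := hw s
    simp only [hw', Pi.add_apply, Pi.sub_apply] at *
    omega
  rw [key]
  exact PP.stable_sub (hst m) hw'le
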